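/- Let v, w : ℝ³ → ℝ be continuously differentiable functions of (t,x,y) with w nowhere zero. Then (v,w) solves the system (max) (v_t + w_x = 0, w_t + w_y + v w_x − w v_x = 0) if and only if (v,w) solves the Friedrichs-symmetrized system: −w v_t − w w_x = 0 and w_t − w v_x + v w_x + w_y = 0, i.e. S₀ (v,w)_tᵀ + S₁ (v,w)_xᵀ + S₂ (v,w)_yᵀ = 0 with S₀ = [[−w,0],[0,1]], S₁ = [[0,−w],[−w,v]], S₂ = [[0,0],[0,1]]. Moreover, the matrices S₀, S₁, S₂ are symmetric, and S₀ is positive definite if and only if w < 0. -/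

import Mathlib

open Matrix

/-- Partial derivative of `f : ℝⁿ → ℝ` in the `i`-th coordinate direction. -/
noncomputable def pd {n : ℕ} (i : Fin n) (f : (Fin n → ℝ) → ℝ) (x : Fin n → ℝ) : ℝ :=
  fderiv ℝ f x (Pi.single i 1)

/-- `S₀ = [[−w,0],[0,1]]`. -/
noncomputable def S0 (w : ℝ) : Matrix (Fin 2) (Fin 2) ℝ := !![-w, 0; 0, 1]

/-- `S₁ = [[0,−w],[−w,v]]`. -/
noncomputable def S1 (v w : ℝ) : Matrix (Fin 2) (Fin 2) ℝ := !![0, -w; -w, v]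

/-- `S₂ = [[0,0],[0,1]]`. -/
noncomputable def S2 : Matrix (Fin 2) (Fin 2) ℝ := !![0, 0; 0, 1]

/-- Coordinates on ℝ³ are `(t,x,y)` with indices `(0,1,2)`.
For C¹ functions `v, w` with `w` nowhere zero, `(v,w)` solves the system (max) iff it
solves the Friedrichs-symmetrized system `−w v_t − w w_x = 0`,
`w_t − w v_x + v w_x + w_y = 0`.  Moreover `S₀, S₁, S₂` are symmetric, and `S₀` is
positive definite iff `w < 0`. -/
theorem stmt6 (v w : (Fin 3 → ℝ) → ℝ) (hv : ContDiff ℝ 1 v) (hw : ContDiff ℝ 1 w)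
    (hw0 : ∀ x, w x ≠ 0) :
    ((∀ x, pd 0 v x + pd 1 w x = 0 ∧
        pd 0 w x + pd 2 w x + v x * pd 1 w x - w x * pd 1 v x = 0) ↔
      (∀ x, -(w x) * pd 0 v x - w x * pd 1 w x = 0 ∧
        pd 0 w x - w x * pd 1 v x + v x * pd 1 w x + pd 2 w x = 0)) ∧
    (∀ x, (S0 (w x)).IsSymm ∧ (S1 (v x) (w x)).IsSymm ∧ S2.IsSymm) ∧
    (∀ x, (S0 (w x)).PosDef ↔ w x < 0) := by
  refine ⟨?_, ?_, ?_⟩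
  · constructor
    · intro h x
      obtain ⟨h1, h2⟩ := h x
      constructor
      · have : pd 0 v x = -pd 1 w x := by linarith
        rw [this]; ring
      · linarith
    · intro h x
      obtain ⟨h1, h2⟩ := h x
      have hwx := hw0 x
      constructor
      · have : w x * (pd 0 v x + pd 1 w x) = 0 := by linarith
        rcases mul_eq_zero.mp this with h' | h'
        · exact absurd h' hwx
        · exact h'
      · linarith
  · intro x
    refine ⟨?_, ?_, ?_⟩ <;>
      · rw [Matrix.IsSymm]
        ext i j
        fin_cases i <;> fin_cases j <;> simp [S0, S1, S2]
  · intro x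
    constructor
    · intro hpd
      have := (posDef_iff_dotProduct_mulVec.mp hpd).2 (x := (Pi.single 0 1 : Fin 2 → ℝ)) (by
        intro h
        have := congrFun h 0
        simp at this)
      simp [S0, Matrix.mulVec, dotProduct, Fin.sum_univ_two] at this
      linarith
    · intro hwlt
      rw [posDef_iff_dotProduct_mulVec]
      constructor
      · rw [Matrix.IsHermitian]
        ext i j
        fin_cases i <;> fin_cases j <;> simp [S0]
      · intro y hy
        have h0 : y ⬝ᵥ (S0 (w x)).mulVec y = -(w x) * (y 0)^2 + (y 1)^2 := by
          simp [S0, Matrix.mulVec, dotProduct, Fin.sum_univ_two]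
          ring
        rw [show star y = y from rfl, h0]
        rcases ne_or_eq (y 0) 0 with h1 | h1
        · nlinarith [sq_nonneg (y 1), pow_pos (abs_pos.mpr h1) 2, sq_abs (y 0)]
        · have h2 : y 1 ≠ 0 := by
            intro h2
            apply hy
            ext i
            fin_cases i <;> simp [h1, h2]
          nlinarith [pow_pos (abs_pos.mpr h2) 2, sq_abs (y 1)]
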